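/- A finite digraph A has tree duality if and only if there exists a homomorphism from U(A) to A. -/

import Mathlib

def Hom {α β : Type*} (E : α → α → Prop) (F : β → β → Prop) (f : α → β) : Prop :=
  ∀ u v, E u v → F (f u) (f v)

/-- The digraph `U(A)` on nonempty subsets of `A`. -/
def URel {A : Type*} (E : A → A → Prop) :
    {X : Set A // X.Nonempty} → {X : Set A // X.Nonempty} → Prop :=
  fun X Y => (∀ x ∈ X.1, ∃ y ∈ Y.1, E x y) ∧ (∀ y ∈ Y.1, ∃ x ∈ X.1, E x y)

/-- A digraph is an oriented tree when its underlying undirected graph is a tree. -/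
def IsOrientedTree {T : Type*} (G : T → T → Prop) : Prop :=
  (SimpleGraph.fromRel G).IsTree

/-- `(A, E)` has tree duality. -/
def TreeDuality (A : Type) (E : A → A → Prop) : Prop :=
  ∀ (B : Type) (F : B → B → Prop), (¬ ∃ f : B → A, Hom F E f) →
    ∃ (T : Type) (G : T → T → Prop), IsOrientedTree G ∧
      (∃ g : T → B, Hom G F g) ∧ ¬ ∃ h : T → A, Hom G E h

namespace Stmt16Aux

open SimpleGraph

/-! ### Walking an oriented tree guided by a homomorphism to `U(A)` -/

section WalkLemma

variable {T : Type*} {A : Type*} {G : T → T → Prop} {E : A → A → Prop}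
  {g : T → {X : Set A // X.Nonempty}}

open Classical in
noncomputable def stepFn (hg : Hom G (URel E) g) {x v : T}
    (e : (SimpleGraph.fromRel G).Adj x v) (s : {a : A // a ∈ (g x).1}) :
    {a : A // a ∈ (g v).1} :=
  if hG : G x v then
    ⟨((hg x v hG).1 s.1 s.2).choose, ((hg x v hG).1 s.1 s.2).choose_spec.1⟩
  else
    have hG' : G v x := (((SimpleGraph.fromRel_adj G x v).mp e).2).resolve_left hG
    ⟨((hg v x hG').2 s.1 s.2).choose, ((hg v x hG').2 s.1 s.2).choose_spec.1⟩

lemma stepFn_spec_pos (hg : Hom G (URel E) g) {x v : T}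
    (e : (SimpleGraph.fromRel G).Adj x v) (s : {a : A // a ∈ (g x).1}) (hG : G x v) :
    E s.1 (stepFn hg e s).1 := by
  rw [stepFn, dif_pos hG]
  exact ((hg x v hG).1 s.1 s.2).choose_spec.2

lemma stepFn_spec_neg (hg : Hom G (URel E) g) {x v : T}
    (e : (SimpleGraph.fromRel G).Adj x v) (s : {a : A // a ∈ (g x).1})
    (hG : ¬ G x v) (hG' : G v x) :
    E (stepFn hg e s).1 s.1 := by
  rw [stepFn, dif_neg hG]
  exact ((hg v x hG').2 s.1 s.2).choose_spec.2

noncomputable def walkVal (hg : Hom G (URel E) g) :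
    ∀ {x u : T}, (SimpleGraph.fromRel G).Walk x u →
      {a : A // a ∈ (g x).1} → {a : A // a ∈ (g u).1}
  | _, _, .nil, s => s
  | _, _, .cons e p, s => walkVal hg p (stepFn hg e s)

lemma walkVal_concat (hg : Hom G (URel E) g) {x u v : T}
    (p : (SimpleGraph.fromRel G).Walk x u) (e : (SimpleGraph.fromRel G).Adj u v)
    (s : {a : A // a ∈ (g x).1}) :
    walkVal hg (p.concat e) s = stepFn hg e (walkVal hg p s) := by
  induction p with
  | nil => rfl
  | cons e' p ih =>
    rw [SimpleGraph.Walk.concat_cons]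
    exact ih _ _

theorem exists_hom_of_tree (hT : IsOrientedTree G)
    (hnl : ∀ t, ¬ G t t) (hnd : ∀ t t', G t t' → ¬ G t' t)
    (hg : Hom G (URel E) g) : ∃ h : T → A, Hom G E h := by
  classical
  have hT' : (SimpleGraph.fromRel G).IsTree := hT
  obtain ⟨r⟩ := hT'.isConnected.nonempty
  have hup := hT'.existsUnique_path
  let P : ∀ t, (SimpleGraph.fromRel G).Walk r t := fun t => (hup r t).choose
  have hP : ∀ t, (P t).IsPath := fun t => (hup r t).choose_spec.1
  have hPu : ∀ t (q : (SimpleGraph.fromRel G).Walk r t), q.IsPath → q = P t :=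
    fun t q hq => (hup r t).choose_spec.2 q hq
  let a₀ : {a : A // a ∈ (g r).1} := ⟨(g r).2.choose, (g r).2.choose_spec⟩
  refine ⟨fun t => (walkVal hg (P t) a₀).1, ?_⟩
  intro t t' hGtt'
  have hne' : t ≠ t' := fun h' => hnl t (by rw [h'] at hGtt' ⊢; exact hGtt')
  have e : (SimpleGraph.fromRel G).Adj t t' :=
    (SimpleGraph.fromRel_adj G t t').mpr ⟨hne', Or.inl hGtt'⟩
  by_cases hmem : t' ∈ (P t).support
  · -- `P t = (P t').concat e.symm`
    have htake : (P t).takeUntil t' hmem = P t' :=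
      hPu t' _ ((hP t).takeUntil hmem)
    have hdrop : (P t).dropUntil t' hmem = SimpleGraph.Walk.cons e.symm SimpleGraph.Walk.nil := by
      have h1 : ((P t).dropUntil t' hmem).IsPath := (hP t).dropUntil hmem
      have h2 : (SimpleGraph.Walk.cons e.symm SimpleGraph.Walk.nil :
          (SimpleGraph.fromRel G).Walk t' t).IsPath := by
        simp [SimpleGraph.Walk.isPath_def, e.ne']
      exact (hup t' t).unique h1 h2
    have hPt : P t = (P t').concat e.symm := by
      rw [SimpleGraph.Walk.concat_eq_append, ← htake, ← hdrop,
        SimpleGraph.Walk.take_spec]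
    have hv : walkVal hg (P t) a₀ = stepFn hg e.symm (walkVal hg (P t') a₀) := by
      rw [hPt, walkVal_concat]
    show E (walkVal hg (P t) a₀).1 (walkVal hg (P t') a₀).1
    rw [hv]
    exact stepFn_spec_neg hg e.symm (walkVal hg (P t') a₀) (hnd t t' hGtt') hGtt'
  · -- `P t' = (P t).concat e`
    have hconc : ((P t).concat e).IsPath := by
      have : ((P t).concat e).reverse.IsPath := by
        rw [SimpleGraph.Walk.reverse_concat]
        rw [SimpleGraph.Walk.cons_isPath_iff]
        refine ⟨(hP t).reverse, ?_⟩
        rw [SimpleGraph.Walk.support_reverse, List.mem_reverse]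
        exact hmem
      simpa only [SimpleGraph.Walk.reverse_reverse] using this.reverse
    have hPt' : P t' = (P t).concat e := (hPu t' _ hconc).symm
    have hv : walkVal hg (P t') a₀ = stepFn hg e (walkVal hg (P t) a₀) := by
      rw [hPt', walkVal_concat]
    show E (walkVal hg (P t) a₀).1 (walkVal hg (P t') a₀).1
    rw [hv]
    exact stepFn_spec_pos hg e (walkVal hg (P t) a₀) hGtt'

end WalkLemma

/-! ### Prefix trees -/

section PrefixTree

variable {β : Type*}

def preG (S : Set (List (Bool × β))) :
    {l : List (Bool × β) // l ∈ S} → {l : List (Bool × β) // l ∈ S} → Prop :=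
  fun x y => (∃ b, y.1 = x.1 ++ [(true, b)]) ∨ (∃ b, x.1 = y.1 ++ [(false, b)])

lemma ne_of_append {l : List (Bool × β)} {c : Bool × β} : l ≠ l ++ [c] := by
  intro h
  have := congrArg List.length h
  simp at this

lemma preG_adj_iff {S : Set (List (Bool × β))} {x y : {l : List (Bool × β) // l ∈ S}} :
    (SimpleGraph.fromRel (preG S)).Adj x y ↔
      (∃ c, y.1 = x.1 ++ [c]) ∨ (∃ c, x.1 = y.1 ++ [c]) := by
  rw [SimpleGraph.fromRel_adj]
  constructor
  · rintro ⟨-, (⟨b, h⟩ | ⟨b, h⟩) | (⟨b, h⟩ | ⟨b, h⟩)⟩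
    exacts [Or.inl ⟨_, h⟩, Or.inr ⟨_, h⟩, Or.inr ⟨_, h⟩, Or.inl ⟨_, h⟩]
  · rintro (⟨⟨d, b⟩, h⟩ | ⟨⟨d, b⟩, h⟩)
    · refine ⟨fun hxy => ne_of_append (hxy ▸ h), ?_⟩
      cases d
      · exact Or.inr (Or.inr ⟨b, h⟩)
      · exact Or.inl (Or.inl ⟨b, h⟩)
    · refine ⟨fun hxy => ne_of_append (hxy ▸ h : y.1 = y.1 ++ [(d, b)]), ?_⟩
      cases d
      · exact Or.inl (Or.inr ⟨b, h⟩)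
      · exact Or.inr (Or.inl ⟨b, h⟩)

theorem preG_isTree {S : Set (List (Bool × β))} (hnil : [] ∈ S)
    (hpc : ∀ l c, l ++ [c] ∈ S → l ∈ S) :
    (SimpleGraph.fromRel (preG S)).IsTree := by
  constructor
  · -- connected
    have key : ∀ (n : ℕ) (x : {l : List (Bool × β) // l ∈ S}), x.1.length ≤ n →
        (SimpleGraph.fromRel (preG S)).Reachable x ⟨[], hnil⟩ := by
      intro n
      induction n with
      | zero =>
        intro x hx
        have hx0 : x.1 = [] := List.length_eq_zero_iff.mp (Nat.le_zero.mp hx)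
        rw [show x = ⟨[], hnil⟩ from Subtype.ext hx0]
      | succ n ih =>
        intro x hx
        rcases List.eq_nil_or_concat' x.1 with h0 | ⟨L, c, hc⟩
        · rw [show x = ⟨[], hnil⟩ from Subtype.ext h0]
        · have hL : L ∈ S := hpc L c (hc ▸ x.2)
          have hadj : (SimpleGraph.fromRel (preG S)).Adj ⟨L, hL⟩ x :=
            preG_adj_iff.mpr (Or.inl ⟨c, hc⟩)
          refine (hadj.symm.reachable).trans (ih ⟨L, hL⟩ ?_)
          have hlen : x.1.length = L.length + 1 := by
            rw [hc]; simp
          have : L.length + 1 ≤ n + 1 := hlen ▸ hx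
          simpa using Nat.le_of_succ_le_succ this
    have : Nonempty {l : List (Bool × β) // l ∈ S} := ⟨⟨[], hnil⟩⟩
    exact SimpleGraph.Connected.mk (fun x y => (key _ x le_rfl).trans (key _ y le_rfl).symm)
  · -- acyclic
    classical
    intro v c hc
    have hsup : c.support ≠ [] := SimpleGraph.Walk.support_ne_nil c
    obtain ⟨u, hu⟩ : ∃ u, u ∈ List.argmax (fun x : {l : List (Bool × β) // l ∈ S} =>
        x.1.length) c.support := by
      rcases h : List.argmax (fun x : {l : List (Bool × β) // l ∈ S} => x.1.length)
          c.support with _ | u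
      · exact absurd (List.argmax_eq_none.mp h) hsup
      · exact ⟨u, rfl⟩
    have humem : u ∈ c.support := List.argmax_mem hu
    have hmax : ∀ w ∈ c.support, w.1.length ≤ u.1.length :=
      fun w hw => List.le_of_mem_argmax (f := fun x : {l : List (Bool × β) // l ∈ S} => x.1.length) hw hu
    set d := c.rotate u humem with hd
    have hdc : d.IsCycle := hc.rotate humem
    have hdsup : ∀ w ∈ d.support, w.1.length ≤ u.1.length := by
      intro w hw
      rw [SimpleGraph.Walk.support_eq_cons] at hw
      rcases List.mem_cons.mp hw with h1 | h1
      · subst h1; exact le_rfl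
      · exact hmax w (List.mem_of_mem_tail
          (((SimpleGraph.Walk.support_rotate c u humem).mem_iff).mp h1))
    clear_value d
    cases d with
    | nil => exact SimpleGraph.Walk.IsCycle.not_of_nil hdc
    | cons h p =>
      obtain ⟨hp, he⟩ := (SimpleGraph.Walk.cons_isCycle_iff p h).mp hdc
      rename_i w₁
      -- p : Walk w₁ u
      have hpnn : ¬ p.Nil := SimpleGraph.Walk.not_nil_of_ne h.ne'
      have hrnn : ¬ p.reverse.Nil := by
        rw [SimpleGraph.Walk.nil_iff_length_eq] at hpnn ⊢
        rwa [SimpleGraph.Walk.length_reverse]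
      obtain ⟨w₂, h₂, q, hq⟩ := SimpleGraph.Walk.not_nil_iff.mp hrnn
      have hw2p : w₂ ∈ p.support := by
        have : w₂ ∈ p.reverse.support := by
          rw [hq, SimpleGraph.Walk.support_cons]
          exact List.mem_cons_of_mem _ q.start_mem_support
        rwa [SimpleGraph.Walk.support_reverse, List.mem_reverse] at this
      have hedge : s(u, w₂) ∈ p.edges := by
        have : s(u, w₂) ∈ p.reverse.edges := by
          rw [hq, SimpleGraph.Walk.edges_cons]
          exact List.mem_cons_self
        rwa [SimpleGraph.Walk.edges_reverse, List.mem_reverse] at this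
      have hw12 : w₁ ≠ w₂ := by
        rintro rfl
        exact he hedge
      -- both are parents of u
      have hw1d : w₁ ∈ (SimpleGraph.Walk.cons h p).support := by
        rw [SimpleGraph.Walk.support_cons]
        exact List.mem_cons_of_mem _ p.start_mem_support
      have hw2d : w₂ ∈ (SimpleGraph.Walk.cons h p).support := by
        rw [SimpleGraph.Walk.support_cons]
        exact List.mem_cons_of_mem _ hw2p
      have hpar : ∀ w : {l : List (Bool × β) // l ∈ S},
          (SimpleGraph.fromRel (preG S)).Adj u w → w.1.length ≤ u.1.length →
          ∃ cc, u.1 = w.1 ++ [cc] := by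
        intro w hadj hlen
        rcases preG_adj_iff.mp hadj with ⟨cc, hcc⟩ | ⟨cc, hcc⟩
        · exfalso
          have := congrArg List.length hcc
          simp at this
          omega
        · exact ⟨cc, hcc⟩
      obtain ⟨c₁, hc₁⟩ := hpar w₁ h (hdsup w₁ hw1d)
      obtain ⟨c₂, hc₂⟩ := hpar w₂ h₂ (hdsup w₂ hw2d)
      apply hw12
      apply Subtype.ext
      exact (List.append_inj' (hc₁.symm.trans hc₂) rfl).1

end PrefixTree

/-! ### Arc consistency -/

section Backward

variable {A : Type} {B : Type} (E : A → A → Prop) (F : B → B → Prop)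

def Sarc : ℕ → B → Set A
  | 0, _ => Set.univ
  | k+1, b => {a | (∀ b', F b b' → ∃ a' ∈ Sarc k b', E a a') ∧
                   (∀ b', F b' b → ∃ a' ∈ Sarc k b', E a' a)}

lemma Sarc_antitone : ∀ (k : ℕ) (b : B), Sarc E F (k+1) b ⊆ Sarc E F k b := by
  intro k
  induction k with
  | zero => intro b a _; exact Set.mem_univ a
  | succ k ih =>
    intro b a ha
    obtain ⟨h1, h2⟩ := ha
    refine ⟨fun b' hb' => ?_, fun b' hb' => ?_⟩
    · obtain ⟨a', ha', hE⟩ := h1 b' hb'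
      exact ⟨a', ih b' ha', hE⟩
    · obtain ⟨a', ha', hE⟩ := h2 b' hb'
      exact ⟨a', ih b' ha', hE⟩

lemma nonempty_iInter {A : Type} [Fintype A] (Y : ℕ → Set A)
    (hmono : ∀ k, Y (k+1) ⊆ Y k) (hne : ∀ k, (Y k).Nonempty) :
    (⋂ k, Y k).Nonempty := by
  have hle : ∀ {m k : ℕ}, m ≤ k → Y k ⊆ Y m := by
    intro m k h
    induction h with
    | refl => exact subset_rfl
    | step h ih => exact (hmono _).trans ih
  obtain ⟨k₀, hk₀⟩ : ∃ k₀, (Y k₀).ncard = sInf (Set.range fun k => (Y k).ncard) :=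
    Nat.sInf_mem (Set.range_nonempty _)
  have hmin : ∀ j, (Y k₀).ncard ≤ (Y j).ncard := by
    intro j
    rw [hk₀]
    exact Nat.sInf_le ⟨j, rfl⟩
  have heq : ∀ j, k₀ ≤ j → Y j = Y k₀ :=
    fun j hj => Set.eq_of_subset_of_ncard_le (hle hj) (hmin j) (Set.toFinite _)
  obtain ⟨a, ha⟩ := hne k₀
  refine ⟨a, Set.mem_iInter.mpr fun j => ?_⟩
  rcases le_total j k₀ with h | h
  · exact hle h ha
  · rw [heq j h]; exact ha

lemma Sarc_inter_urel [Fintype A] {b b' : B} (hF : F b b')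
    (hb : (⋂ k, Sarc E F k b).Nonempty) (hb' : (⋂ k, Sarc E F k b').Nonempty) :
    URel E ⟨⋂ k, Sarc E F k b, hb⟩ ⟨⋂ k, Sarc E F k b', hb'⟩ := by
  constructor
  · intro x hx
    have hY : (⋂ k, {a | a ∈ Sarc E F k b' ∧ E x a}).Nonempty := by
      refine nonempty_iInter _ (fun k => ?_) (fun k => ?_)
      · intro a ⟨ha1, ha2⟩; exact ⟨Sarc_antitone E F k b' ha1, ha2⟩
      · obtain ⟨a', ha', hE⟩ := (Set.mem_iInter.mp hx (k+1)).1 b' hF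
        exact ⟨a', ha', hE⟩
    obtain ⟨y, hy⟩ := hY
    exact ⟨y, Set.mem_iInter.mpr fun k => (Set.mem_iInter.mp hy k).1,
      (Set.mem_iInter.mp hy 0).2⟩
  · intro y hy
    have hY : (⋂ k, {a | a ∈ Sarc E F k b ∧ E a y}).Nonempty := by
      refine nonempty_iInter _ (fun k => ?_) (fun k => ?_)
      · intro a ⟨ha1, ha2⟩; exact ⟨Sarc_antitone E F k b ha1, ha2⟩
      · obtain ⟨a', ha', hE⟩ := (Set.mem_iInter.mp hy (k+1)).2 b hF
        exact ⟨a', ha', hE⟩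
    obtain ⟨x, hx⟩ := hY
    exact ⟨x, Set.mem_iInter.mpr fun k => (Set.mem_iInter.mp hx k).1,
      (Set.mem_iInter.mp hx 0).2⟩

/-- Valid descent sequences of depth at most `k` starting at `b`. -/
def Vd : ℕ → B → List (Bool × B) → Prop
  | _, _, [] => True
  | k, b, (d, b') :: l => ∃ k', k = k' + 1 ∧ (if d then F b b' else F b' b) ∧ Vd k' b' l

lemma Vd_prefix : ∀ (l : List (Bool × B)) (k : ℕ) (b : B) (c : Bool × B),
    Vd F k b (l ++ [c]) → Vd F k b l := by
  intro l
  induction l with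
  | nil => intro k b c _; trivial
  | cons x t ih =>
    intro k b c hv
    obtain ⟨d, b'⟩ := x
    obtain ⟨k', hk, hc, hrest⟩ := hv
    exact ⟨k', hk, hc, ih k' b' c hrest⟩

def labL : B → List (Bool × B) → B
  | b, [] => b
  | _, (_, b') :: l => labL b' l

lemma labL_append : ∀ (l : List (Bool × B)) (b : B) (c : Bool × B),
    labL b (l ++ [c]) = c.2 := by
  intro l
  induction l with
  | nil => intro b c; rfl
  | cons x t ih => intro b c; exact ih x.2 c

lemma Vd_last : ∀ (l : List (Bool × B)) (k : ℕ) (b : B) (d : Bool) (b' : B),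
    Vd F k b (l ++ [(d, b')]) →
      if d then F (labL b l) b' else F b' (labL b l) := by
  intro l
  induction l with
  | nil =>
    intro k b d b' hv
    obtain ⟨k', _, hc, -⟩ := hv
    exact hc
  | cons x t ih =>
    intro k b d b' hv
    obtain ⟨dx, bx⟩ := x
    obtain ⟨k', hk, hc, hrest⟩ := hv
    exact ih k' bx d b' hrest

/-- Every homomorphism from the depth-`k` unfolding tree at `b` to `A`
sends the root into `Sarc k b`. -/
lemma Vd_key [Fintype A] : ∀ (k : ℕ) (b : B)
    (h : {l : List (Bool × B) // l ∈ {l | Vd F k b l}} → A),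
    Hom (preG {l | Vd F k b l}) E h → h ⟨[], trivial⟩ ∈ Sarc E F k b := by
  intro k
  induction k with
  | zero => intro b h _; exact Set.mem_univ _
  | succ k ih =>
    intro b h hh
    refine ⟨fun b' hb' => ?_, fun b' hb' => ?_⟩
    · -- out-neighbour
      let ι : {l : List (Bool × B) // l ∈ {l | Vd F k b' l}} →
          {l : List (Bool × B) // l ∈ {l | Vd F (k+1) b l}} :=
        fun l => ⟨(true, b') :: l.1, ⟨k, rfl, by simpa using hb', l.2⟩⟩
      have hι : ∀ x y, preG {l | Vd F k b' l} x y → preG {l | Vd F (k+1) b l} (ι x) (ι y) := by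
        rintro x y (⟨c, hc⟩ | ⟨c, hc⟩)
        · exact Or.inl ⟨c, by simp [ι, hc]⟩
        · exact Or.inr ⟨c, by simp [ι, hc]⟩
      have hkey := ih b' (fun x => h (ι x)) (fun x y hxy => hh _ _ (hι x y hxy))
      have harc : preG {l | Vd F (k+1) b l} ⟨[], trivial⟩ (ι ⟨[], trivial⟩) :=
        Or.inl ⟨b', rfl⟩
      exact ⟨h (ι ⟨[], trivial⟩), hkey, hh _ _ harc⟩
    · -- in-neighbour
      let ι : {l : List (Bool × B) // l ∈ {l | Vd F k b' l}} →
          {l : List (Bool × B) // l ∈ {l | Vd F (k+1) b l}} :=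
        fun l => ⟨(false, b') :: l.1, ⟨k, rfl, by simpa using hb', l.2⟩⟩
      have hι : ∀ x y, preG {l | Vd F k b' l} x y → preG {l | Vd F (k+1) b l} (ι x) (ι y) := by
        rintro x y (⟨c, hc⟩ | ⟨c, hc⟩)
        · exact Or.inl ⟨c, by simp [ι, hc]⟩
        · exact Or.inr ⟨c, by simp [ι, hc]⟩
      have hkey := ih b' (fun x => h (ι x)) (fun x y hxy => hh _ _ (hι x y hxy))
      have harc : preG {l | Vd F (k+1) b l} (ι ⟨[], trivial⟩) ⟨[], trivial⟩ :=
        Or.inr ⟨b', rfl⟩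
      exact ⟨h (ι ⟨[], trivial⟩), hkey, hh _ _ harc⟩

end Backward

end Stmt16Aux

open Stmt16Aux in
/-- A finite digraph has tree duality iff there is a homomorphism from `U(A)` to `A`. -/
theorem stmt16 (A : Type) [Fintype A] (E : A → A → Prop) :
    TreeDuality A E ↔ ∃ φ : {X : Set A // X.Nonempty} → A, Hom (URel E) E φ := by
  constructor
  · intro htd
    by_cases hl : ∃ a, E a a
    · obtain ⟨a, ha⟩ := hl
      exact ⟨fun _ => a, fun _ _ _ => ha⟩
    · by_cases hX : ∃ X : {X : Set A // X.Nonempty}, URel E X X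
      · exfalso
        obtain ⟨X₀, hX₀⟩ := hX
        have hnf : ¬ ∃ f : Fin (Fintype.card A + 1) → A,
            Hom (fun i j => i < j) E f := by
          rintro ⟨f, hf⟩
          obtain ⟨i, j, hij, hfij⟩ := Fintype.exists_ne_map_eq_of_card_lt f (by simp)
          rcases hij.lt_or_gt with hlt | hlt
          · exact hl ⟨f j, hfij ▸ hf i j hlt⟩
          · exact hl ⟨f i, hfij ▸ hf j i hlt⟩
        obtain ⟨T, G, hTree, ⟨g0, hg0⟩, hnoh⟩ := htd _ _ hnf
        have hnl : ∀ t, ¬ G t t := fun t h => lt_irrefl _ (hg0 t t h)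
        have hnd : ∀ t t', G t t' → ¬ G t' t :=
          fun t t' h h' => lt_asymm (hg0 _ _ h) (hg0 _ _ h')
        exact hnoh (exists_hom_of_tree hTree hnl hnd
          (g := fun _ => X₀) (fun _ _ _ => hX₀))
      · by_contra hφ
        obtain ⟨T, G, hTree, ⟨g, hg⟩, hnoh⟩ := htd _ _ hφ
        have hnl : ∀ t, ¬ G t t := fun t h => hX ⟨g t, hg t t h⟩
        have hnd : ∀ t t', G t t' → ¬ G t' t := by
          intro t t' h h'
          have h1 := hg t t' h
          have h2 := hg t' t h'
          refine hX ⟨⟨(g t).1 ∪ (g t').1, (g t).2.mono Set.subset_union_left⟩, ?_, ?_⟩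
          · rintro x (hx | hx)
            · obtain ⟨y, hy, hxy⟩ := h1.1 x hx
              exact ⟨y, Or.inr hy, hxy⟩
            · obtain ⟨y, hy, hxy⟩ := h2.1 x hx
              exact ⟨y, Or.inl hy, hxy⟩
          · rintro y (hy | hy)
            · obtain ⟨x, hx, hxy⟩ := h2.2 y hy
              exact ⟨x, Or.inr hx, hxy⟩
            · obtain ⟨x, hx, hxy⟩ := h1.2 y hy
              exact ⟨x, Or.inl hx, hxy⟩
        exact hnoh (exists_hom_of_tree hTree hnl hnd hg)
  · rintro ⟨φ, hφ⟩ B F hB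
    by_cases hne : ∀ b, (⋂ k, Sarc E F k b).Nonempty
    · exfalso
      apply hB
      refine ⟨fun b => φ ⟨⋂ k, Sarc E F k b, hne b⟩, ?_⟩
      intro b b' hbb'
      exact hφ _ _ (Sarc_inter_urel E F hbb' (hne b) (hne b'))
    · push_neg at hne
      obtain ⟨b₀, hb₀⟩ := hne
      have hk : ∃ k, Sarc E F k b₀ = ∅ := by
        by_contra hk
        push_neg at hk
        have hcon := nonempty_iInter (fun k => Sarc E F k b₀)
          (fun k => Sarc_antitone E F k b₀) hk
        rw [hb₀] at hcon
        exact Set.not_nonempty_empty hcon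
      obtain ⟨k, hk⟩ := hk
      refine ⟨{l : List (Bool × B) // l ∈ {l | Vd F k b₀ l}}, preG _, ?_, ?_, ?_⟩
      · exact preG_isTree trivial (fun l c h => Vd_prefix F l k b₀ c h)
      · refine ⟨fun x => labL b₀ x.1, ?_⟩
        rintro x y (⟨c, hc⟩ | ⟨c, hc⟩)
        · have hv := Vd_last F x.1 k b₀ true c (hc ▸ y.2)
          simp only [if_true] at hv
          show F (labL b₀ x.1) (labL b₀ y.1)
          rw [hc, labL_append]
          exact hv
        · have hv := Vd_last F y.1 k b₀ false c (hc ▸ x.2)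
          simp only [Bool.false_eq_true, if_false] at hv
          show F (labL b₀ x.1) (labL b₀ y.1)
          rw [hc, labL_append]
          exact hv
      · rintro ⟨h, hh⟩
        have := Vd_key E F k b₀ h hh
        rw [hk] at this
        exact this
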